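/- Let $p, q$ be projections in a von Neumann algebra and let $0 \le \alpha \le \beta$ be real numbers. Then the spectral-order supremum of $\alpha p$ and $\beta q$ is $\alpha p \vee \beta q = \alpha(p \vee q - q) + \beta q$, where $p \vee q$ denotes the supremum in the projection lattice. -/

import Mathlib

noncomputable section

set_option linter.unusedSectionVars false
set_option maxHeartbeats 400000
set_option synthInstance.maxHeartbeats 400000

open ContinuousLinearMap RCLike
open scoped InnerProductSpace


/-- `E` is the spectral family (resolution of identity) of the self-adjoint element `x`,
i.e. `E l` is the spectral projection `χ_{(-∞,l]}(x)`. -/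
def IsSpectralFamily {A : Type*} [Ring A] [StarRing A] [PartialOrder A] [Module ℝ A]
    (x : A) (E : ℝ → A) : Prop :=
  (∀ l, IsSelfAdjoint (E l)) ∧ (∀ l, IsIdempotentElem (E l)) ∧
  Monotone E ∧
  (∀ l, IsGLB (E '' Set.Ioi l) (E l)) ∧
  (∃ a : ℝ, 0 < a ∧ (∀ l, l < -a → E l = 0) ∧ (∀ l, a < l → E l = 1)) ∧
  (∀ l, x * E l ≤ l • E l ∧ l • (1 - E l) ≤ x * (1 - E l))

/-- The spectral order: `x ⪯ y` iff `E^y_l ≤ E^x_l` for every `l : ℝ`. -/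
def SpecLE {A : Type*} [Ring A] [StarRing A] [PartialOrder A] [Module ℝ A] (x y : A) : Prop :=
  ∀ E F : ℝ → A, IsSpectralFamily x E → IsSpectralFamily y F → ∀ l, F l ≤ E l

namespace SpecAux
variable {H : Type*} [NormedAddCommGroup H] [InnerProductSpace ℂ H] [CompleteSpace H]

local notation "A" => H →L[ℂ] H

lemma symm_of_sa {e : A} (he : IsSelfAdjoint e) (x y : H) :
    ⟪e x, y⟫_ℂ = ⟪x, e y⟫_ℂ := by
  have := (isSelfAdjoint_iff_isSymmetric.mp he) x y
  simpa using this

lemma inner_proj {e : A} (he : IsSelfAdjoint e) (he2 : IsIdempotentElem e) (w : H) :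
    re ⟪e w, w⟫_ℂ = ‖e w‖ ^ 2 := by
  have h1 : ⟪e w, w⟫_ℂ = ⟪e w, e w⟫_ℂ := by
    conv_lhs => rw [← he2.eq]
    rw [ContinuousLinearMap.mul_apply]
    exact symm_of_sa he (e w) w
  rw [h1, inner_self_eq_norm_sq]

lemma re_smul_inner (l : ℝ) (x y : H) : re ⟪l • x, y⟫_ℂ = l * re ⟪x, y⟫_ℂ := by
  rw [real_smul_eq_coe_smul (K := ℂ) l x, inner_smul_real_left]
  simp

lemma smul_sa (l : ℝ) {e : A} (he : IsSelfAdjoint e) : IsSelfAdjoint (l • e) := by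
  rw [isSelfAdjoint_iff_isSymmetric]
  intro x y
  simp only [ContinuousLinearMap.coe_coe, ContinuousLinearMap.smul_apply]
  rw [real_smul_eq_coe_smul (K := ℂ) l (e x), real_smul_eq_coe_smul (K := ℂ) l (e y),
    inner_smul_real_left, inner_smul_real_right, symm_of_sa he x y]

lemma proj_norm_le {e : A} (he : IsSelfAdjoint e) (he2 : IsIdempotentElem e) (w : H) :
    ‖e w‖ ^ 2 ≤ ‖w‖ ^ 2 := by
  have h1 := inner_proj he he2 w
  have h2 : re ⟪e w, w⟫_ℂ ≤ ‖⟪e w, w⟫_ℂ‖ := re_le_norm _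
  have h3 : ‖⟪e w, w⟫_ℂ‖ ≤ ‖e w‖ * ‖w‖ := norm_inner_le_norm _ _
  nlinarith [norm_nonneg (e w), norm_nonneg w]

variable {u v : H →L[ℂ] H}

lemma re_comb (hu : IsSelfAdjoint u) (hv : IsSelfAdjoint v)
    (hu2 : IsIdempotentElem u) (hv2 : IsIdempotentElem v) (c s t : ℝ) (w : H) :
    re ⟪(c • (1 : H →L[ℂ] H) + s • u + t • v) w, w⟫_ℂ
      = c * ‖w‖ ^ 2 + s * ‖u w‖ ^ 2 + t * ‖v w‖ ^ 2 := by
  simp only [ContinuousLinearMap.add_apply, ContinuousLinearMap.smul_apply,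
    ContinuousLinearMap.one_apply, inner_add_left, map_add]
  rw [re_smul_inner, re_smul_inner, re_smul_inner, inner_proj hu hu2, inner_proj hv hv2,
    ← inner_self_eq_norm_sq (𝕜 := ℂ) w]

lemma orth_bound (hu : IsSelfAdjoint u) (hv : IsSelfAdjoint v)
    (hu2 : IsIdempotentElem u) (hv2 : IsIdempotentElem v)
    (huv : u * v = 0) (hvu : v * u = 0) (w : H) :
    ‖u w‖ ^ 2 + ‖v w‖ ^ 2 ≤ ‖w‖ ^ 2 := by
  have hP : IsSelfAdjoint (u + v) := hu.add hv
  have hP2 : IsIdempotentElem (u + v) := by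
    unfold IsIdempotentElem
    rw [add_mul, mul_add, mul_add, hu2.eq, hv2.eq, huv, hvu]
    abel
  have h1 : re ⟪(u + v) w, w⟫_ℂ = ‖u w‖ ^ 2 + ‖v w‖ ^ 2 := by
    simp only [ContinuousLinearMap.add_apply, inner_add_left, map_add,
      inner_proj hu hu2, inner_proj hv hv2]
  have h2 := inner_proj hP hP2 w
  have h3 := proj_norm_le hP hP2 w
  linarith [h1 ▸ h2]

lemma isPositive_comb (hu : IsSelfAdjoint u) (hv : IsSelfAdjoint v)
    (hu2 : IsIdempotentElem u) (hv2 : IsIdempotentElem v)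
    (huv : u * v = 0) (hvu : v * u = 0) (c s t : ℝ)
    (hkey : ∀ x y z : ℝ, 0 ≤ y → 0 ≤ z → y + z ≤ x → 0 ≤ c * x + s * y + t * z) :
    (c • (1 : H →L[ℂ] H) + s • u + t • v).IsPositive := by
  constructor
  · exact isSelfAdjoint_iff_isSymmetric.mp (((smul_sa c (IsSelfAdjoint.one (R := H →L[ℂ] H))).add (smul_sa s hu)).add (smul_sa t hv))
  · intro w
    rw [reApplyInnerSelf, re_comb hu hv hu2 hv2]
    exact hkey _ _ _ (sq_nonneg _) (sq_nonneg _) (orth_bound hu hv hu2 hv2 huv hvu w)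



lemma proj_nonneg {e : A} (he : IsSelfAdjoint e) (he2 : IsIdempotentElem e) : (0 : H →L[ℂ] H) ≤ e := by
  rw [le_def]
  refine ⟨isSelfAdjoint_iff_isSymmetric.mp (by simpa using he), fun w => ?_⟩
  rw [reApplyInnerSelf]
  simp only [ContinuousLinearMap.sub_apply, ContinuousLinearMap.zero_apply, sub_zero]
  rw [inner_proj he he2]
  positivity

lemma proj_le_one {e : A} (he : IsSelfAdjoint e) (he2 : IsIdempotentElem e) : e ≤ (1 : H →L[ℂ] H) := by
  rw [le_def]
  have h1 : IsSelfAdjoint ((1 : H →L[ℂ] H) - e) := (IsSelfAdjoint.one (R := H →L[ℂ] H)).sub he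
  exact (nonneg_iff_isPositive _).mp (proj_nonneg h1 he2.one_sub)

-- test scalar-ring interplay instances
example (c : ℝ) (x y : A) : x * (c • y) = c • (x * y) := mul_smul_comm c x y
example (c : ℝ) (x y : A) : (c • x) * y = c • (x * y) := smul_mul_assoc c x y



def sf (u v : H →L[ℂ] H) (a b : ℝ) : ℝ → H →L[ℂ] H := fun l =>
  if l < 0 then 0 else if l < a then 1 - u - v else if l < b then 1 - v else 1

variable {a b l : ℝ}

lemma sf_neg (h : l < 0) : sf u v a b l = 0 := if_pos h

lemma sf_lo (h0 : 0 ≤ l) (h : l < a) : sf u v a b l = 1 - u - v := by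
  unfold sf; rw [if_neg (not_lt.mpr h0), if_pos h]

lemma sf_mid (ha : 0 ≤ a) (h0 : a ≤ l) (h : l < b) : sf u v a b l = 1 - v := by
  unfold sf; rw [if_neg (by linarith), if_neg (by linarith), if_pos h]

lemma sf_hi (ha : 0 ≤ a) (hab : a ≤ b) (h : b ≤ l) : sf u v a b l = 1 := by
  unfold sf; rw [if_neg (by linarith), if_neg (by linarith), if_neg (by linarith)]

lemma sf_right (ha : 0 ≤ a) (hab : a ≤ b) {s : ℝ} (hls : l < s) :
    ∃ t, l < t ∧ t ≤ s ∧ sf u v a b t = sf u v a b l ∧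
      (t < 0 ∨ (0 < t ∧ t < a) ∨ (a < t ∧ t < b) ∨ b < t) := by
  rcases lt_or_ge l 0 with h0 | h0
  · have h1 : l < min s 0 := lt_min hls h0
    have h2 : min s 0 ≤ s := min_le_left _ _
    have h3 : min s 0 ≤ 0 := min_le_right _ _
    refine ⟨(l + min s 0) / 2, by linarith, by linarith, ?_, Or.inl (by linarith)⟩
    rw [sf_neg (by linarith), sf_neg h0]
  rcases lt_or_ge l a with ha' | ha'
  · have h1 : l < min s a := lt_min hls ha'
    have h2 : min s a ≤ s := min_le_left _ _
    have h3 : min s a ≤ a := min_le_right _ _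
    refine ⟨(l + min s a) / 2, by linarith, by linarith, ?_,
      Or.inr (Or.inl ⟨by linarith, by linarith⟩)⟩
    rw [sf_lo (by linarith) (by linarith), sf_lo h0 ha']
  rcases lt_or_ge l b with hb' | hb'
  · have h1 : l < min s b := lt_min hls hb'
    have h2 : min s b ≤ s := min_le_left _ _
    have h3 : min s b ≤ b := min_le_right _ _
    refine ⟨(l + min s b) / 2, by linarith, by linarith, ?_,
      Or.inr (Or.inr (Or.inl ⟨by linarith, by linarith⟩))⟩
    rw [sf_mid ha (by linarith) (by linarith), sf_mid ha ha' hb']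
  · refine ⟨(l + s) / 2, by linarith, by linarith, ?_,
      Or.inr (Or.inr (Or.inr (by linarith)))⟩
    rw [sf_hi ha hab (by linarith), sf_hi ha hab hb']



variable {u v : H →L[ℂ] H} {a b l : ℝ}

lemma idem_sum (hu2 : IsIdempotentElem u) (hv2 : IsIdempotentElem v)
    (huv : u * v = 0) (hvu : v * u = 0) : IsIdempotentElem (u + v) := by
  unfold IsIdempotentElem
  rw [add_mul, mul_add, mul_add, hu2.eq, hv2.eq, huv, hvu]
  abel

section hyps
variable (hu : IsSelfAdjoint u) (hv : IsSelfAdjoint v)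
  (hu2 : IsIdempotentElem u) (hv2 : IsIdempotentElem v)
  (huv : u * v = 0) (hvu : v * u = 0) (ha : 0 ≤ a) (hab : a ≤ b)

include hu hv hu2 hv2 huv hvu in
lemma sf_sa : ∀ l, IsSelfAdjoint (sf u v a b l) := by
  intro l
  unfold sf
  split_ifs
  · exact .zero _
  · exact ((IsSelfAdjoint.one _).sub hu).sub hv
  · exact (IsSelfAdjoint.one _).sub hv
  · exact .one _

include hu2 hv2 huv hvu in
lemma sf_idem : ∀ l, IsIdempotentElem (sf u v a b l) := by
  intro l
  unfold sf
  split_ifs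
  · exact .zero
  · rw [sub_sub]; exact (idem_sum hu2 hv2 huv hvu).one_sub
  · exact hv2.one_sub
  · exact .one

include hu hv hu2 hv2 huv hvu ha hab in
lemma sf_mono : Monotone (sf u v a b) := by
  have k01 : (0 : H →L[ℂ] H) ≤ 1 - u - v := by
    rw [sub_sub]
    exact proj_nonneg ((IsSelfAdjoint.one _).sub (hu.add hv))
      (idem_sum hu2 hv2 huv hvu).one_sub
  have k12 : (1 : H →L[ℂ] H) - u - v ≤ 1 - v := by
    rw [le_def]
    have : (1 : H →L[ℂ] H) - v - (1 - u - v) = u := by abel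
    rw [this]
    exact (nonneg_iff_isPositive _).mp (proj_nonneg hu hu2)
  have k23 : (1 : H →L[ℂ] H) - v ≤ 1 := by
    rw [le_def]
    have : (1 : H →L[ℂ] H) - (1 - v) = v := by abel
    rw [this]
    exact (nonneg_iff_isPositive _).mp (proj_nonneg hv hv2)
  intro x y hxy
  rcases lt_or_ge x 0 with hx | hx
  · rw [sf_neg hx]
    rcases lt_or_ge y 0 with hy | hy
    · rw [sf_neg hy]
    rcases lt_or_ge y a with hy' | hy'
    · rw [sf_lo hy hy']; exact k01
    rcases lt_or_ge y b with hy'' | hy''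
    · rw [sf_mid ha hy' hy'']; exact le_trans k01 k12
    · rw [sf_hi ha hab hy'']; exact le_trans k01 (le_trans k12 k23)
  rcases lt_or_ge x a with hxa | hxa
  · rw [sf_lo hx hxa]
    rcases lt_or_ge y a with hy' | hy'
    · rw [sf_lo (le_trans hx hxy) hy']
    rcases lt_or_ge y b with hy'' | hy''
    · rw [sf_mid ha hy' hy'']; exact k12
    · rw [sf_hi ha hab hy'']; exact le_trans k12 k23
  rcases lt_or_ge x b with hxb | hxb
  · rw [sf_mid ha hxa hxb]
    rcases lt_or_ge y b with hy'' | hy''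
    · rw [sf_mid ha (le_trans hxa hxy) hy'']
    · rw [sf_hi ha hab hy'']; exact k23
  · rw [sf_hi ha hab hxb, sf_hi ha hab (le_trans hxb hxy)]

include hu hv hu2 hv2 huv hvu ha hab in
lemma sf_glb : ∀ l, IsGLB (sf u v a b '' Set.Ioi l) (sf u v a b l) := by
  intro l
  constructor
  · rintro y ⟨s, hs, rfl⟩
    exact sf_mono hu hv hu2 hv2 huv hvu ha hab (le_of_lt hs)
  · intro c hc
    obtain ⟨t, hlt, -, hsf, -⟩ := sf_right (u := u) (v := v) ha hab (show l < l + 1 by linarith)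
    rw [← hsf]
    exact hc ⟨t, hlt, rfl⟩

include hu hv hu2 hv2 huv hvu ha hab in
lemma sf_ineq : ∀ l, (a • u + b • v) * sf u v a b l ≤ l • sf u v a b l ∧
    l • (1 - sf u v a b l) ≤ (a • u + b • v) * (1 - sf u v a b l) := by
  have hxu : (a • u + b • v) * u = a • u := by
    rw [add_mul, smul_mul_assoc, smul_mul_assoc, hu2.eq, hvu, smul_zero, add_zero]
  have hxv : (a • u + b • v) * v = b • v := by
    rw [add_mul, smul_mul_assoc, smul_mul_assoc, hv2.eq, huv, smul_zero, zero_add]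
  intro l
  rcases lt_or_ge l 0 with h0 | h0
  · rw [sf_neg h0]
    constructor
    · rw [mul_zero, smul_zero]
    · rw [sub_zero, mul_one, le_def]
      have : a • u + b • v - l • (1 : H →L[ℂ] H)
          = (-l) • (1 : H →L[ℂ] H) + a • u + b • v := by module
      rw [this]
      exact isPositive_comb hu hv hu2 hv2 huv hvu _ _ _
        (fun x y z hy hz hxyz => by nlinarith)
  rcases lt_or_ge l a with hla | hla
  · rw [sf_lo h0 hla]
    have e1 : (a • u + b • v) * (1 - u - v) = 0 := by
      rw [mul_sub, mul_sub, mul_one, hxu, hxv]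
      module
    have e2 : (1 : H →L[ℂ] H) - (1 - u - v) = u + v := by abel
    constructor
    · rw [e1, le_def, sub_zero]
      have : l • ((1 : H →L[ℂ] H) - u - v)
          = l • (1 : H →L[ℂ] H) + (-l) • u + (-l) • v := by module
      rw [this]
      exact isPositive_comb hu hv hu2 hv2 huv hvu _ _ _
        (fun x y z hy hz hxyz => by nlinarith)
    · rw [e2, le_def]
      have : (a • u + b • v) * (u + v) - l • (u + v)
          = (0 : ℝ) • (1 : H →L[ℂ] H) + (a - l) • u + (b - l) • v := by
        rw [mul_add, hxu, hxv]; module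
      rw [this]
      exact isPositive_comb hu hv hu2 hv2 huv hvu _ _ _
        (fun x y z hy hz hxyz => by nlinarith)
  rcases lt_or_ge l b with hlb | hlb
  · rw [sf_mid ha hla hlb]
    have e1 : (a • u + b • v) * (1 - v) = a • u := by
      rw [mul_sub, mul_one, hxv]; module
    have e2 : (1 : H →L[ℂ] H) - (1 - v) = v := by abel
    constructor
    · rw [e1, le_def]
      have : l • ((1 : H →L[ℂ] H) - v) - a • u
          = l • (1 : H →L[ℂ] H) + (-a) • u + (-l) • v := by module
      rw [this]
      exact isPositive_comb hu hv hu2 hv2 huv hvu _ _ _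
        (fun x y z hy hz hxyz => by nlinarith)
    · rw [e2, le_def]
      have : (a • u + b • v) * v - l • v
          = (0 : ℝ) • (1 : H →L[ℂ] H) + (0 : ℝ) • u + (b - l) • v := by
        rw [hxv]; module
      rw [this]
      exact isPositive_comb hu hv hu2 hv2 huv hvu _ _ _
        (fun x y z hy hz hxyz => by nlinarith)
  · rw [sf_hi ha hab hlb]
    constructor
    · rw [mul_one, le_def]
      have : l • (1 : H →L[ℂ] H) - (a • u + b • v)
          = l • (1 : H →L[ℂ] H) + (-a) • u + (-b) • v := by module
      rw [this]
      exact isPositive_comb hu hv hu2 hv2 huv hvu _ _ _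
        (fun x y z hy hz hxyz => by nlinarith)
    · rw [sub_self, mul_zero, smul_zero]

include hu hv hu2 hv2 huv hvu ha hab in
theorem sf_isSpectralFamily : IsSpectralFamily (a • u + b • v) (sf u v a b) := by
  refine ⟨sf_sa hu hv hu2 hv2 huv hvu, sf_idem hu2 hv2 huv hvu,
    sf_mono hu hv hu2 hv2 huv hvu ha hab, sf_glb hu hv hu2 hv2 huv hvu ha hab,
    ⟨b + 1, by linarith, fun l hl => sf_neg (by linarith), fun l hl => sf_hi ha hab (by linarith)⟩,
    sf_ineq hu hv hu2 hv2 huv hvu ha hab⟩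

end hyps

section uniq
variable {e : H →L[ℂ] H}

lemma eval_le (hu : IsSelfAdjoint u) (hv : IsSelfAdjoint v)
    (hu2 : IsIdempotentElem u) (hv2 : IsIdempotentElem v)
    (h1 : (a • u + b • v) * e ≤ l • e) {z : H} (hz : e z = z) :
    a * ‖u z‖ ^ 2 + b * ‖v z‖ ^ 2 ≤ l * ‖z‖ ^ 2 := by
  have hp := (le_def ((a • u + b • v) * e) (l • e)).mp h1
  have h : 0 ≤ re ⟪(l • e - (a • u + b • v) * e) z, z⟫_ℂ := hp.2 z
  simp only [ContinuousLinearMap.sub_apply, ContinuousLinearMap.smul_apply,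
    ContinuousLinearMap.mul_apply, hz, inner_sub_left, map_sub] at h
  rw [re_smul_inner] at h
  have hx : re ⟪(a • u + b • v) z, z⟫_ℂ = a * ‖u z‖ ^ 2 + b * ‖v z‖ ^ 2 := by
    simp only [ContinuousLinearMap.add_apply, ContinuousLinearMap.smul_apply,
      inner_add_left, map_add, re_smul_inner, inner_proj hu hu2, inner_proj hv hv2]
  rw [hx, inner_self_eq_norm_sq] at h
  linarith

lemma eval_ge (hu : IsSelfAdjoint u) (hv : IsSelfAdjoint v)
    (hu2 : IsIdempotentElem u) (hv2 : IsIdempotentElem v)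
    (h2 : l • (1 - e) ≤ (a • u + b • v) * (1 - e)) {z : H} (hz : e z = 0) :
    l * ‖z‖ ^ 2 ≤ a * ‖u z‖ ^ 2 + b * ‖v z‖ ^ 2 := by
  have hp := (le_def (l • (1 - e)) ((a • u + b • v) * (1 - e))).mp h2
  have h : 0 ≤ re ⟪((a • u + b • v) * (1 - e) - l • (1 - e)) z, z⟫_ℂ := hp.2 z
  simp only [ContinuousLinearMap.sub_apply, ContinuousLinearMap.smul_apply,
    ContinuousLinearMap.mul_apply, ContinuousLinearMap.one_apply, hz, sub_zero] at h
  rw [inner_sub_left, map_sub, re_smul_inner] at h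
  have hx : re ⟪(a • u + b • v) z, z⟫_ℂ = a * ‖u z‖ ^ 2 + b * ‖v z‖ ^ 2 := by
    simp only [ContinuousLinearMap.add_apply, ContinuousLinearMap.smul_apply,
      inner_add_left, map_add, re_smul_inner, inner_proj hu hu2, inner_proj hv hv2]
  rw [hx, inner_self_eq_norm_sq] at h
  linarith

lemma comm_x (hu : IsSelfAdjoint u) (hv : IsSelfAdjoint v) (he : IsSelfAdjoint e)
    (h1 : (a • u + b • v) * e ≤ l • e) :
    e * (a • u + b • v) = (a • u + b • v) * e := by
  have hx : IsSelfAdjoint (a • u + b • v) := (smul_sa a hu).add (smul_sa b hv)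
  have hp := ((le_def ((a • u + b • v) * e) (l • e)).mp h1).1
  have hsa : IsSelfAdjoint ((a • u + b • v) * e) := by
    have h2 : IsSelfAdjoint (l • e - (l • e - (a • u + b • v) * e)) := (smul_sa l he).sub (isSelfAdjoint_iff_isSymmetric.mpr hp)
    simpa using h2
  have h3 := hsa.star_eq
  rwa [star_mul, he.star_eq, hx.star_eq] at h3

lemma comm_smul {y : H →L[ℂ] H} (c : ℝ) (h : e * y = y * e) : e * (c • y) = (c • y) * e := by
  rw [mul_smul_comm, smul_mul_assoc, h]

lemma x_sq (hu2 : IsIdempotentElem u) (hv2 : IsIdempotentElem v)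
    (huv : u * v = 0) (hvu : v * u = 0) :
    (a • u + b • v) * (a • u + b • v) = (a * a) • u + (b * b) • v := by
  rw [add_mul, mul_add, mul_add, smul_mul_assoc, smul_mul_assoc, smul_mul_assoc, smul_mul_assoc,
    mul_smul_comm, mul_smul_comm, mul_smul_comm, mul_smul_comm, hu2.eq, hv2.eq, huv, hvu]
  module

lemma comm_v (hu2 : IsIdempotentElem u) (hv2 : IsIdempotentElem v)
    (huv : u * v = 0) (hvu : v * u = 0) (ha : 0 ≤ a) (hab : a < b)
    (hcx : e * (a • u + b • v) = (a • u + b • v) * e) : e * v = v * e := by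
  have hb : (0:ℝ) < b * (b - a) := by nlinarith
  have hv' : v = (b * (b - a))⁻¹ • ((a • u + b • v) * (a • u + b • v) - a • (a • u + b • v)) := by
    rw [x_sq hu2 hv2 huv hvu]
    rw [show (a*a) • u + (b*b) • v - a • (a • u + b • v) = (b * (b-a)) • v by module]
    rw [smul_smul, inv_mul_cancel₀ (ne_of_gt hb), one_smul]
  rw [hv']
  apply comm_smul
  rw [mul_sub, sub_mul]
  congr 1
  · rw [← mul_assoc, hcx, mul_assoc, hcx, mul_assoc]
  · rw [mul_smul_comm, smul_mul_assoc, hcx]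

lemma comm_u (hu2 : IsIdempotentElem u) (hv2 : IsIdempotentElem v)
    (huv : u * v = 0) (hvu : v * u = 0) (ha : 0 < a) (hab : a < b)
    (hcx : e * (a • u + b • v) = (a • u + b • v) * e) : e * u = u * e := by
  have hb : (0:ℝ) < a * (b - a) := by nlinarith
  have hu' : u = (a * (b - a))⁻¹ • (b • (a • u + b • v) - (a • u + b • v) * (a • u + b • v)) := by
    rw [x_sq hu2 hv2 huv hvu]
    rw [show b • (a • u + b • v) - ((a*a) • u + (b*b) • v) = (a * (b-a)) • u by module]
    rw [smul_smul, inv_mul_cancel₀ (ne_of_gt hb), one_smul]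
  rw [hu']
  apply comm_smul
  rw [mul_sub, sub_mul]
  congr 1
  · rw [mul_smul_comm, smul_mul_assoc, hcx]
  · rw [← mul_assoc, hcx, mul_assoc, hcx, mul_assoc]

lemma comm_P (hu2 : IsIdempotentElem u) (hv2 : IsIdempotentElem v)
    (huv : u * v = 0) (hvu : v * u = 0) (ha : 0 < a) (hab : a ≤ b)
    (hcx : e * (a • u + b • v) = (a • u + b • v) * e) : e * (u + v) = (u + v) * e := by
  rcases eq_or_lt_of_le hab with rfl | hab'
  · have hP : u + v = a⁻¹ • (a • u + a • v) := by
      rw [smul_add, smul_smul, smul_smul, inv_mul_cancel₀ (ne_of_gt ha), one_smul, one_smul]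
    rw [hP]
    exact comm_smul _ hcx
  · have h1 := comm_u hu2 hv2 huv hvu ha hab' hcx
    have h2 := comm_v hu2 hv2 huv hvu (le_of_lt ha) hab' hcx
    rw [mul_add, add_mul, h1, h2]

lemma norm_sq_zero {z : H} (h : ‖z‖ ^ 2 ≤ 0) : z = 0 := by
  have := sq_nonneg ‖z‖
  have h2 : ‖z‖ ^ 2 = 0 := le_antisymm h this
  have := pow_eq_zero_iff (n := 2) (by norm_num) |>.mp h2
  exact norm_eq_zero.mp this

end uniq

section upt
variable {e : H →L[ℂ] H}

lemma unique_pt (hu : IsSelfAdjoint u) (hv : IsSelfAdjoint v)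
    (hu2 : IsIdempotentElem u) (hv2 : IsIdempotentElem v)
    (huv : u * v = 0) (hvu : v * u = 0) (ha : 0 ≤ a) (hab : a ≤ b)
    (he : IsSelfAdjoint e) (he2 : IsIdempotentElem e)
    (h1 : (a • u + b • v) * e ≤ l • e) (h2 : l • (1 - e) ≤ (a • u + b • v) * (1 - e))
    (hgood : l < 0 ∨ (0 < l ∧ l < a) ∨ (a < l ∧ l < b) ∨ b < l) :
    e = sf u v a b l := by
  have hb0 : 0 ≤ b := le_trans ha hab
  rcases hgood with hl | ⟨hl0, hla⟩ | ⟨hal, hlb⟩ | hbl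
  · -- l < 0 : e = 0
    rw [sf_neg hl]
    ext w
    have hz : e (e w) = e w := by rw [← ContinuousLinearMap.mul_apply, he2.eq]
    have hb := eval_le hu hv hu2 hv2 h1 hz
    have h3 : ‖e w‖ ^ 2 ≤ 0 := by
      nlinarith [sq_nonneg ‖u (e w)‖, sq_nonneg ‖v (e w)‖, sq_nonneg ‖e w‖,
        mul_nonneg ha (sq_nonneg ‖u (e w)‖), mul_nonneg hb0 (sq_nonneg ‖v (e w)‖)]
    rw [ContinuousLinearMap.zero_apply]
    exact norm_sq_zero h3
  · -- 0 < l < a : e = 1 - u - v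
    have ha' : 0 < a := lt_trans hl0 hla
    have hcx := comm_x hu hv he h1
    have hP : e * (u + v) = (u + v) * e := comm_P hu2 hv2 huv hvu ha' hab hcx
    have hP2 : IsIdempotentElem (u + v) := idem_sum hu2 hv2 huv hvu
    have step1 : (u + v) * e = 0 := by
      ext w
      have hz : e (((u + v) * e) w) = ((u + v) * e) w := by
        rw [← ContinuousLinearMap.mul_apply, ← mul_assoc, hP, mul_assoc, he2.eq]
      have hPz : (u + v) (((u + v) * e) w) = ((u + v) * e) w := by
        rw [← ContinuousLinearMap.mul_apply, ← mul_assoc, hP2.eq]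
      set z := ((u + v) * e) w with hzdef
      have hb := eval_le hu hv hu2 hv2 h1 hz
      have hsum : ‖u z‖ ^ 2 + ‖v z‖ ^ 2 = ‖z‖ ^ 2 := by
        have c1 : re ⟪(u + v) z, z⟫_ℂ = ‖u z‖ ^ 2 + ‖v z‖ ^ 2 := by
          simp only [ContinuousLinearMap.add_apply, inner_add_left, map_add,
            inner_proj hu hu2, inner_proj hv hv2]
        rw [hPz, inner_self_eq_norm_sq] at c1
        linarith
      have h3 : ‖z‖ ^ 2 ≤ 0 := by
        nlinarith [sq_nonneg ‖u z‖, sq_nonneg ‖v z‖]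
      rw [ContinuousLinearMap.zero_apply]
      exact norm_sq_zero h3
    have step2 : (1 - (u + v)) * (1 - e) = 0 := by
      have op1 : e * ((1 - (u + v)) * (1 - e)) = 0 := by
        have hc : e * (1 - (u + v)) = (1 - (u + v)) * e := by
          rw [mul_sub, sub_mul, mul_one, one_mul, hP]
        rw [← mul_assoc, hc, mul_assoc, mul_sub, mul_one, he2.eq, sub_self, mul_zero]
      have op2 : (u + v) * ((1 - (u + v)) * (1 - e)) = 0 := by
        have hz0 : (u + v) * (1 - (u + v)) = 0 := by
          rw [mul_sub, mul_one, hP2.eq, sub_self]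
        rw [← mul_assoc, hz0, zero_mul]
      ext w
      have hz : e (((1 - (u + v)) * (1 - e)) w) = 0 := by
        rw [← ContinuousLinearMap.mul_apply, op1, ContinuousLinearMap.zero_apply]
      have hPz : (u + v) (((1 - (u + v)) * (1 - e)) w) = 0 := by
        rw [← ContinuousLinearMap.mul_apply, op2, ContinuousLinearMap.zero_apply]
      set z := ((1 - (u + v)) * (1 - e)) w with hzdef
      have hb := eval_ge hu hv hu2 hv2 h2 hz
      have hsum : ‖u z‖ ^ 2 + ‖v z‖ ^ 2 = 0 := by
        have c1 : re ⟪(u + v) z, z⟫_ℂ = ‖u z‖ ^ 2 + ‖v z‖ ^ 2 := by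
          simp only [ContinuousLinearMap.add_apply, inner_add_left, map_add,
            inner_proj hu hu2, inner_proj hv hv2]
        rw [hPz] at c1
        simp only [inner_zero_left, map_zero] at c1
        linarith
      have h3 : ‖z‖ ^ 2 ≤ 0 := by
        nlinarith [sq_nonneg ‖u z‖, sq_nonneg ‖v z‖]
      rw [ContinuousLinearMap.zero_apply]
      exact norm_sq_zero h3
    have exp : (1 - (u + v)) * (1 - e) = 1 - e - (u + v) + (u + v) * e := by
      noncomm_ring
    rw [step1, add_zero, step2] at exp
    have h4 : e - (1 - u - v) = -(1 - e - (u + v)) := by abel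
    rw [← exp, neg_zero] at h4
    rw [sf_lo (le_of_lt hl0) hla]
    exact sub_eq_zero.mp h4
  · -- a < l < b : e = 1 - v
    have hab' : a < b := lt_trans hal hlb
    have hl0 : 0 < l := lt_of_le_of_lt ha hal
    have hcx := comm_x hu hv he h1
    have hPv : e * v = v * e := comm_v hu2 hv2 huv hvu ha hab' hcx
    have step1 : v * e = 0 := by
      ext w
      have hz : e ((v * e) w) = (v * e) w := by
        rw [← ContinuousLinearMap.mul_apply, ← mul_assoc, hPv, mul_assoc, he2.eq]
      have hvz : v ((v * e) w) = (v * e) w := by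
        rw [← ContinuousLinearMap.mul_apply, ← mul_assoc, hv2.eq]
      set z := (v * e) w with hzdef
      have hb := eval_le hu hv hu2 hv2 h1 hz
      have hnv : ‖v z‖ ^ 2 = ‖z‖ ^ 2 := by rw [hvz]
      have h3 : ‖z‖ ^ 2 ≤ 0 := by
        nlinarith [sq_nonneg ‖u z‖, sq_nonneg ‖z‖, mul_nonneg ha (sq_nonneg ‖u z‖)]
      rw [ContinuousLinearMap.zero_apply]
      exact norm_sq_zero h3
    have step2 : (1 - v) * (1 - e) = 0 := by
      have op1 : e * ((1 - v) * (1 - e)) = 0 := by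
        have hc : e * (1 - v) = (1 - v) * e := by
          rw [mul_sub, sub_mul, mul_one, one_mul, hPv]
        rw [← mul_assoc, hc, mul_assoc, mul_sub, mul_one, he2.eq, sub_self, mul_zero]
      have op2 : v * ((1 - v) * (1 - e)) = 0 := by
        have hz0 : v * (1 - v) = 0 := by
          rw [mul_sub, mul_one, hv2.eq, sub_self]
        rw [← mul_assoc, hz0, zero_mul]
      ext w
      have hz : e (((1 - v) * (1 - e)) w) = 0 := by
        rw [← ContinuousLinearMap.mul_apply, op1, ContinuousLinearMap.zero_apply]
      have hvz : v (((1 - v) * (1 - e)) w) = 0 := by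
        rw [← ContinuousLinearMap.mul_apply, op2, ContinuousLinearMap.zero_apply]
      set z := ((1 - v) * (1 - e)) w with hzdef
      have hb := eval_ge hu hv hu2 hv2 h2 hz
      have hnv : ‖v z‖ ^ 2 = 0 := by rw [hvz]; simp
      have hnu : ‖u z‖ ^ 2 ≤ ‖z‖ ^ 2 := proj_norm_le hu hu2 z
      have h3 : ‖z‖ ^ 2 ≤ 0 := by nlinarith [sq_nonneg ‖u z‖]
      rw [ContinuousLinearMap.zero_apply]
      exact norm_sq_zero h3
    have exp : (1 - v) * (1 - e) = 1 - e - v + v * e := by noncomm_ring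
    rw [step1, add_zero, step2] at exp
    have h4 : e - (1 - v) = -(1 - e - v) := by abel
    rw [← exp, neg_zero] at h4
    rw [sf_mid ha (le_of_lt hal) hlb]
    exact sub_eq_zero.mp h4
  · -- b < l : e = 1
    rw [sf_hi ha hab (le_of_lt hbl)]
    ext w
    have hz : e (w - e w) = 0 := by
      rw [map_sub, ← ContinuousLinearMap.mul_apply, he2.eq, sub_self]
    have hb := eval_ge hu hv hu2 hv2 h2 hz
    have horth := orth_bound hu hv hu2 hv2 huv hvu (w - e w)
    have h3 : ‖w - e w‖ ^ 2 ≤ 0 := by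
      nlinarith [sq_nonneg ‖u (w - e w)‖, sq_nonneg ‖v (w - e w)‖, sq_nonneg ‖w - e w‖]
    have h4 := norm_sq_zero h3
    rw [ContinuousLinearMap.one_apply]
    have := sub_eq_zero.mp h4
    exact this.symm

lemma sf_unique (hu : IsSelfAdjoint u) (hv : IsSelfAdjoint v)
    (hu2 : IsIdempotentElem u) (hv2 : IsIdempotentElem v)
    (huv : u * v = 0) (hvu : v * u = 0) (ha : 0 ≤ a) (hab : a ≤ b)
    {E : ℝ → H →L[ℂ] H} (hE : IsSpectralFamily (a • u + b • v) E) (l : ℝ) :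
    E l = sf u v a b l := by
  have hpt : ∀ t : ℝ, (t < 0 ∨ (0 < t ∧ t < a) ∨ (a < t ∧ t < b) ∨ b < t) →
      E t = sf u v a b t := fun t ht =>
    unique_pt hu hv hu2 hv2 huv hvu ha hab (hE.1 t) (hE.2.1 t)
      (hE.2.2.2.2.2 t).1 (hE.2.2.2.2.2 t).2 ht
  have hglb := hE.2.2.2.1 l
  have hglb' : IsGLB (E '' Set.Ioi l) (sf u v a b l) := by
    constructor
    · rintro y ⟨s, hs, rfl⟩
      obtain ⟨t, hlt, hts, hsf, hgood⟩ := sf_right (u := u) (v := v) ha hab hs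
      rw [← hsf, ← hpt t hgood]
      exact hE.2.2.1 hts
    · intro c hc
      obtain ⟨t, hlt, -, hsf, hgood⟩ := sf_right (u := u) (v := v) ha hab
        (show l < l + 1 by linarith)
      rw [← hsf, ← hpt t hgood]
      exact hc ⟨t, hlt, rfl⟩
  exact hglb.unique hglb'

end upt

end SpecAux


namespace SpecAux
variable {H' : Type*} [NormedAddCommGroup H'] [InnerProductSpace ℂ H'] [CompleteSpace H']

theorem stmt14' (p q r : H' →L[ℂ] H')
    (hp : IsSelfAdjoint p) (hp2 : IsIdempotentElem p)
    (hq : IsSelfAdjoint q) (hq2 : IsIdempotentElem q)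
    (hr : IsSelfAdjoint r) (hr2 : IsIdempotentElem r)
    (hpr : p ≤ r) (hqr : q ≤ r)
    (hrmin : ∀ s, IsSelfAdjoint s → IsIdempotentElem s → p ≤ s → q ≤ s → r ≤ s)
    (α β : ℝ) (h0 : 0 ≤ α) (hαβ : α ≤ β) :
    SpecLE (α • p) (α • (r - q) + β • q) ∧
    SpecLE (β • q) (α • (r - q) + β • q) ∧
    ∀ z : H' →L[ℂ] H', IsSelfAdjoint z → SpecLE (α • p) z → SpecLE (β • q) z →
      SpecLE (α • (r - q) + β • q) z := by
  have hβ : 0 ≤ β := le_trans h0 hαβ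
  -- r * q = q and q * r = q
  have hrq : r * q = q := by
    ext w
    rw [ContinuousLinearMap.mul_apply]
    set z := q w with hzdef
    have hz : q z = z := by rw [hzdef, ← ContinuousLinearMap.mul_apply, hq2.eq]
    have hpos := (le_def q r).mp hqr
    have h1 : 0 ≤ re ⟪(r - q) z, z⟫_ℂ := hpos.2 z
    rw [ContinuousLinearMap.sub_apply, inner_sub_left, map_sub, inner_proj hq hq2, hz,
      ← inner_self_eq_norm_sq (𝕜 := ℂ)] at h1
    have h1r : IsSelfAdjoint ((1 : H' →L[ℂ] H') - r) := (IsSelfAdjoint.one _).sub hr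
    have h2 := inner_proj h1r hr2.one_sub z
    have h2' : re ⟪((1 : H' →L[ℂ] H') - r) z, z⟫_ℂ = re ⟪z, z⟫_ℂ - re ⟪r z, z⟫_ℂ := by
      rw [ContinuousLinearMap.sub_apply, ContinuousLinearMap.one_apply, inner_sub_left, map_sub]
    have h3 : ‖((1 : H' →L[ℂ] H') - r) z‖ ^ 2 ≤ 0 := by
      rw [← h2, h2']
      linarith
    have h4 := norm_sq_zero h3
    rw [ContinuousLinearMap.sub_apply, ContinuousLinearMap.one_apply] at h4
    have := sub_eq_zero.mp h4
    exact this.symm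
  have hqr' : q * r = q := by
    have := congrArg star hrq
    rwa [star_mul, hr.star_eq, hq.star_eq] at this
  -- r - q is a projection orthogonal to q
  have hu : IsSelfAdjoint (r - q) := hr.sub hq
  have hu2 : IsIdempotentElem (r - q) := by
    unfold IsIdempotentElem
    rw [mul_sub, sub_mul, sub_mul, hr2.eq, hq2.eq, hrq, hqr']
    abel
  have huv : (r - q) * q = 0 := by rw [sub_mul, hrq, hq2.eq, sub_self]
  have hvu : q * (r - q) = 0 := by rw [mul_sub, hqr', hq2.eq, sub_self]
  -- the three explicit spectral families
  have hF1 : IsSpectralFamily (α • p) (sf p 0 α α) := by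
    have := sf_isSpectralFamily hp (IsSelfAdjoint.zero _) hp2 IsIdempotentElem.zero
      (mul_zero p) (zero_mul p) h0 le_rfl
    rwa [smul_zero, add_zero] at this
  have hF2 : IsSpectralFamily (β • q) (sf 0 q β β) := by
    have := sf_isSpectralFamily (IsSelfAdjoint.zero _) hq IsIdempotentElem.zero hq2
      (zero_mul q) (mul_zero q) hβ le_rfl
    rwa [smul_zero, zero_add] at this
  have hF3 : IsSpectralFamily (α • (r - q) + β • q) (sf (r - q) q α β) :=
    sf_isSpectralFamily hu hq hu2 hq2 huv hvu h0 hαβ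
  -- uniqueness
  have uniqP : ∀ E : ℝ → H' →L[ℂ] H', IsSpectralFamily (α • p) E →
      ∀ l, E l = sf p 0 α α l := by
    intro E hE l
    refine sf_unique hp (IsSelfAdjoint.zero _) hp2 IsIdempotentElem.zero
      (mul_zero p) (zero_mul p) h0 le_rfl ?_ l
    rwa [smul_zero, add_zero]
  have uniqQ : ∀ E : ℝ → H' →L[ℂ] H', IsSpectralFamily (β • q) E →
      ∀ l, E l = sf 0 q β β l := by
    intro E hE l
    refine sf_unique (IsSelfAdjoint.zero _) hq IsIdempotentElem.zero hq2
      (zero_mul q) (mul_zero q) hβ le_rfl ?_ l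
    rwa [smul_zero, zero_add]
  have uniqY : ∀ E : ℝ → H' →L[ℂ] H', IsSpectralFamily (α • (r - q) + β • q) E →
      ∀ l, E l = sf (r - q) q α β l := fun E hE l =>
    sf_unique hu hq hu2 hq2 huv hvu h0 hαβ hE l
  refine ⟨?_, ?_, ?_⟩
  · -- SpecLE (α • p) y
    intro E F hE hF l
    rw [uniqP E hE l, uniqY F hF l]
    rcases lt_or_ge l 0 with hl | hl
    · rw [sf_neg hl, sf_neg hl]
    rcases lt_or_ge l α with hlα | hlα
    · rw [sf_lo hl hlα, sf_lo hl hlα, le_def]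
      rw [show (1 : H' →L[ℂ] H') - p - 0 - (1 - (r - q) - q) = r - p by abel]
      exact (le_def p r).mp hpr
    · rw [sf_hi h0 le_rfl hlα]
      rcases lt_or_ge l β with hlβ | hlβ
      · rw [sf_mid h0 hlα hlβ, le_def]
        rw [show (1 : H' →L[ℂ] H') - (1 - q) = q by abel]
        exact (nonneg_iff_isPositive _).mp (proj_nonneg hq hq2)
      · rw [sf_hi h0 hαβ hlβ]
  · -- SpecLE (β • q) y
    intro E F hE hF l
    rw [uniqQ E hE l, uniqY F hF l]
    rcases lt_or_ge l 0 with hl | hl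
    · rw [sf_neg hl, sf_neg hl]
    rcases lt_or_ge l α with hlα | hlα
    · rw [sf_lo hl hlα, sf_lo hl (lt_of_lt_of_le hlα hαβ), le_def]
      rw [show (1 : H' →L[ℂ] H') - 0 - q - (1 - (r - q) - q) = r - q by abel]
      exact (nonneg_iff_isPositive _).mp (proj_nonneg hu hu2)
    rcases lt_or_ge l β with hlβ | hlβ
    · rw [sf_mid h0 hlα hlβ, sf_lo hl hlβ]
      rw [show (1 : H' →L[ℂ] H') - 0 - q = 1 - q by abel]
    · rw [sf_hi h0 hαβ hlβ, sf_hi hβ le_rfl hlβ]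
  · -- minimality
    intro z hzsa hz1 hz2 E F hE hF l
    rw [uniqY E hE l]
    have k1 := hz1 (sf p 0 α α) F hF1 hF l
    have k2 := hz2 (sf 0 q β β) F hF2 hF l
    rcases lt_or_ge l 0 with hl | hl
    · rw [sf_neg hl]
      rw [sf_neg hl] at k1
      exact k1
    rcases lt_or_ge l α with hlα | hlα
    · rw [sf_lo hl hlα]
      rw [sf_lo hl hlα] at k1
      rw [sf_lo hl (lt_of_lt_of_le hlα hαβ)] at k2
      have hf : IsSelfAdjoint (F l) := hF.1 l
      have hf2 : IsIdempotentElem (F l) := hF.2.1 l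
      have hS : IsSelfAdjoint (1 - F l) := (IsSelfAdjoint.one _).sub hf
      have hS2 : IsIdempotentElem (1 - F l) := hf2.one_sub
      have hpS : p ≤ 1 - F l := by
        rw [le_def]
        rw [show (1 : H' →L[ℂ] H') - F l - p = 1 - p - 0 - F l by abel]
        exact (le_def _ _).mp k1
      have hqS : q ≤ 1 - F l := by
        rw [le_def]
        rw [show (1 : H' →L[ℂ] H') - F l - q = 1 - 0 - q - F l by abel]
        exact (le_def _ _).mp k2
      have hrS := hrmin (1 - F l) hS hS2 hpS hqS
      rw [le_def]
      rw [show (1 : H' →L[ℂ] H') - (r - q) - q - F l = 1 - F l - r by abel]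
      exact (le_def _ _).mp hrS
    rcases lt_or_ge l β with hlβ | hlβ
    · rw [sf_mid h0 hlα hlβ]
      rw [sf_lo hl hlβ] at k2
      rw [le_def]
      rw [show (1 : H' →L[ℂ] H') - q - F l = 1 - 0 - q - F l by abel]
      exact (le_def _ _).mp k2
    · rw [sf_hi h0 hαβ hlβ]
      exact proj_le_one (hF.1 l) (hF.2.1 l)

end SpecAux

variable {H : Type*} [NormedAddCommGroup H] [InnerProductSpace ℂ H] [CompleteSpace H]

/-- For projections `p, q` and `0 ≤ α ≤ β`, the spectral order supremum of `α p` and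
`β q` is `α (p ∨ q - q) + β q`, where `r = p ∨ q` is the supremum in the projection
lattice. -/
theorem stmt14 (p q r : H →L[ℂ] H)
    (hp : IsSelfAdjoint p) (hp2 : IsIdempotentElem p)
    (hq : IsSelfAdjoint q) (hq2 : IsIdempotentElem q)
    (hr : IsSelfAdjoint r) (hr2 : IsIdempotentElem r)
    (hpr : p ≤ r) (hqr : q ≤ r)
    (hrmin : ∀ s, IsSelfAdjoint s → IsIdempotentElem s → p ≤ s → q ≤ s → r ≤ s)
    (α β : ℝ) (h0 : 0 ≤ α) (hαβ : α ≤ β) :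
    SpecLE (α • p) (α • (r - q) + β • q) ∧
    SpecLE (β • q) (α • (r - q) + β • q) ∧
    ∀ z : H →L[ℂ] H, IsSelfAdjoint z → SpecLE (α • p) z → SpecLE (β • q) z →
      SpecLE (α • (r - q) + β • q) z := by
  exact SpecAux.stmt14' p q r hp hp2 hq hq2 hr hr2 hpr hqr hrmin α β h0 hαβ
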